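/- Let G be a finite nilpotent group and let k ≥ 2 be an integer. Then G is totally k-closed if and only if every Sylow subgroup of G is totally k-closed. -/

import Mathlib

/-- The `k`-closure of a subgroup `G ≤ Sym(Ω)` (Wielandt's characterization): the set of
permutations `x` such that for every `k`-tuple there is a `g ∈ G` agreeing with `x` on it. -/
def kClosure {Ω : Type*} (k : ℕ) (G : Subgroup (Equiv.Perm Ω)) : Subgroup (Equiv.Perm Ω) where
  carrier := {x | ∀ α : Fin k → Ω, ∃ g ∈ G, ∀ i, x (α i) = g (α i)}
  one_mem' := fun α => ⟨1, G.one_mem, fun _ => rfl⟩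
  mul_mem' := by
    intro x y hx hy α
    obtain ⟨g, hg, hgy⟩ := hy α
    obtain ⟨g', hg', hgx⟩ := hx (fun i => y (α i))
    refine ⟨g' * g, G.mul_mem hg' hg, fun i => ?_⟩
    simp only [Equiv.Perm.mul_apply]
    rw [hgx i, hgy i]
  inv_mem' := by
    intro x hx α
    obtain ⟨g, hg, hgx⟩ := hx (fun i => x⁻¹ (α i))
    refine ⟨g⁻¹, G.inv_mem hg, fun i => ?_⟩
    have h := hgx i
    simp only [Equiv.Perm.coe_inv, Equiv.apply_symm_apply] at h
    exact Equiv.Perm.eq_inv_iff_eq.mpr h.symm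

/-- A finite group is totally `k`-closed if the image of every faithful permutation
representation on a finite set equals its own `k`-closure. -/
def IsTotallyKClosed (k : ℕ) (G : Type*) [Group G] : Prop :=
  ∀ (Ω : Type) [Fintype Ω] (φ : G →* Equiv.Perm Ω), Function.Injective φ →
    kClosure k φ.range = φ.range

theorem mem_kClosure {Ω : Type*} {k : ℕ} {G : Subgroup (Equiv.Perm Ω)} {x : Equiv.Perm Ω} :
    x ∈ kClosure k G ↔ ∀ α : Fin k → Ω, ∃ g ∈ G, ∀ i, x (α i) = g (α i) := Iff.rfl

theorem le_kClosure {Ω : Type*} (k : ℕ) (G : Subgroup (Equiv.Perm Ω)) : G ≤ kClosure k G :=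
  fun g hg => mem_kClosure.mpr fun α => ⟨g, hg, fun _ => rfl⟩

theorem kClosure_bot {Ω : Type*} {k : ℕ} (hk : 1 ≤ k) :
    kClosure k (⊥ : Subgroup (Equiv.Perm Ω)) = ⊥ := by
  refine le_antisymm ?_ (le_kClosure _ _)
  intro x hx
  rw [Subgroup.mem_bot]
  ext ω
  obtain ⟨g, hg, h⟩ := mem_kClosure.mp hx (fun _ => ω)
  rw [Subgroup.mem_bot] at hg
  subst hg
  simpa using h ⟨0, hk⟩

theorem sup_decomp {Ω : Type*} (P Q : Subgroup (Equiv.Perm Ω))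
    (hcomm : ∀ p ∈ P, ∀ q ∈ Q, Commute p q) :
    ∀ h ∈ P ⊔ Q, ∃ p ∈ P, ∃ q ∈ Q, h = p * q := by
  have hPQ : (P ⊔ Q : Subgroup (Equiv.Perm Ω)) = Subgroup.closure ((P : Set _) ∪ (Q : Set _)) := by
    rw [Subgroup.closure_union, Subgroup.closure_eq, Subgroup.closure_eq]
  intro h hh
  rw [hPQ] at hh
  induction hh using Subgroup.closure_induction with
  | mem x hx =>
    rcases hx with hx | hx
    · exact ⟨x, hx, 1, Q.one_mem, (mul_one x).symm⟩
    · exact ⟨1, P.one_mem, x, hx, (one_mul x).symm⟩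
  | one => exact ⟨1, P.one_mem, 1, Q.one_mem, (one_mul 1).symm⟩
  | mul x y hx hy ihx ihy =>
    obtain ⟨p1, hp1, q1, hq1, rfl⟩ := ihx
    obtain ⟨p2, hp2, q2, hq2, rfl⟩ := ihy
    exact ⟨p1 * p2, P.mul_mem hp1 hp2, q1 * q2, Q.mul_mem hq1 hq2,
      ((hcomm p2 hp2 q1 hq1).symm.mul_mul_mul_comm p1 q2)⟩
  | inv x hx ihx =>
    obtain ⟨p, hp, q, hq, rfl⟩ := ihx
    exact ⟨p⁻¹, P.inv_mem hp, q⁻¹, Q.inv_mem hq, by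
      rw [mul_inv_rev, ((hcomm p hp q hq).inv_inv).symm.eq]⟩

theorem kClosure_sup_eq {Ω : Type*} [Finite Ω] {k : ℕ} (hk : 2 ≤ k)
    (P Q : Subgroup (Equiv.Perm Ω))
    (hcomm : ∀ p ∈ P, ∀ q ∈ Q, Commute p q)
    (hcop : ∀ p ∈ P, ∀ q ∈ Q, Nat.Coprime (orderOf p) (orderOf q))
    (hP : kClosure k P = P) (hQ : kClosure k Q = Q) :
    kClosure k (P ⊔ Q) = P ⊔ Q := by
  classical
  refine le_antisymm ?_ (le_kClosure _ _)
  intro x hx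
  have hdec := sup_decomp P Q hcomm
  -- witnesses on tuples
  have hw : ∀ α : Fin k → Ω, ∃ p ∈ P, ∃ q ∈ Q, ∀ i, x (α i) = p (q (α i)) := by
    intro α
    obtain ⟨g, hg, hgx⟩ := mem_kClosure.mp hx α
    obtain ⟨p, hp, q, hq, rfl⟩ := hdec g hg
    exact ⟨p, hp, q, hq, fun i => by simpa using hgx i⟩
  -- pointwise chosen witnesses
  choose pf hpf qf hqf hxf using fun ω => hw (fun _ => ω)
  have hxf0 : ∀ ω, x ω = pf ω (qf ω ω) := fun ω => hxf ω ⟨0, by omega⟩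
  -- CRT: a commuting coprime product fixing a point means each factor fixes it
  have hfix : ∀ p ∈ P, ∀ q ∈ Q, ∀ ω : Ω, p (q ω) = ω → q ω = ω ∧ p ω = ω := by
    intro p hp q hq ω hpq
    have hc : Commute p q := hcomm p hp q hq
    have hco := hcop p hp q hq
    have h1 : ∀ b : ℕ, ((p * q) ^ b) ω = ω := fun b =>
      Equiv.Perm.pow_apply_eq_self_of_apply_eq_self (by simpa using hpq) b
    constructor
    · obtain ⟨b, hb1, hb2⟩ := Nat.chineseRemainder hco 0 1
      have hpb : p ^ b = 1 :=
        orderOf_dvd_iff_pow_eq_one.mp (Nat.modEq_zero_iff_dvd.mp hb1)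
      have hqb : q ^ b = q := by
        have : q ^ b = q ^ 1 := pow_eq_pow_iff_modEq.mpr hb2
        simpa using this
      have := h1 b
      rwa [hc.mul_pow, hpb, hqb, one_mul] at this
    · obtain ⟨b, hb1, hb2⟩ := Nat.chineseRemainder hco 1 0
      have hqb : q ^ b = 1 :=
        orderOf_dvd_iff_pow_eq_one.mp (Nat.modEq_zero_iff_dvd.mp hb2)
      have hpb : p ^ b = p := by
        have : p ^ b = p ^ 1 := pow_eq_pow_iff_modEq.mpr hb1
        simpa using this
      have := h1 b
      rwa [hc.mul_pow, hpb, hqb, mul_one] at this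
  -- well-definedness of the p/q parts at each point
  have hwd : ∀ p ∈ P, ∀ q ∈ Q, ∀ ω : Ω, x ω = p (q ω) →
      q ω = qf ω ω ∧ p ω = pf ω ω := by
    intro p hp q hq ω hxe
    set u := (pf ω)⁻¹ * p with hu
    set v := (qf ω)⁻¹ * q with hv
    have hup : u ∈ P := P.mul_mem (P.inv_mem (hpf ω)) hp
    have hvq : v ∈ Q := Q.mul_mem (Q.inv_mem (hqf ω)) hq
    have hcpv : Commute p (qf ω)⁻¹ := (hcomm p hp (qf ω) (hqf ω)).inv_right
    have hcpfv : Commute (pf ω) (qf ω)⁻¹ := (hcomm (pf ω) (hpf ω) (qf ω) (hqf ω)).inv_right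
    have hfixuv : u (v ω) = ω := by
      have e1 : p ((qf ω)⁻¹ (q ω)) = (qf ω)⁻¹ (p (q ω)) := by
        have := congrArg (fun σ : Equiv.Perm Ω => σ (q ω)) hcpv.eq
        simpa using this
      have e2 : (pf ω) ((qf ω)⁻¹ (qf ω ω)) = (qf ω)⁻¹ ((pf ω) (qf ω ω)) := by
        have := congrArg (fun σ : Equiv.Perm Ω => σ (qf ω ω)) hcpfv.eq
        simpa using this
      have : p (q ω) = pf ω (qf ω ω) := by rw [← hxe, hxf0 ω]
      simp only [hu, hv, Equiv.Perm.mul_apply]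
      rw [e1, this, ← e2]
      simp
    obtain ⟨hv1, hu1⟩ := hfix u hup v hvq ω hfixuv
    constructor
    · have : (qf ω)⁻¹ (q ω) = ω := by simpa [hv] using hv1
      have := congrArg (qf ω) this
      simpa using this
    · have : (pf ω)⁻¹ (p ω) = ω := by simpa [hu] using hu1
      have := congrArg (pf ω) this
      simpa using this
  -- the q-part as a function
  set f : Ω → Ω := fun ω => qf ω ω with hf
  set g : Ω → Ω := fun ω => pf ω ω with hg
  have hfQ : ∀ α : Fin k → Ω, ∃ q ∈ Q, ∀ i, f (α i) = q (α i) := by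
    intro α
    obtain ⟨p, hp, q, hq, ha⟩ := hw α
    exact ⟨q, hq, fun i => ((hwd p hp q hq (α i) (ha i)).1).symm⟩
  have hgP : ∀ α : Fin k → Ω, ∃ p ∈ P, ∀ i, g (α i) = p (α i) := by
    intro α
    obtain ⟨p, hp, q, hq, ha⟩ := hw α
    exact ⟨p, hp, fun i => ((hwd p hp q hq (α i) (ha i)).2).symm⟩
  have hfinj : Function.Injective f := by
    intro ω1 ω2 h12
    obtain ⟨q, hq, ha⟩ := hfQ (fun i => if (i : ℕ) = 0 then ω1 else ω2)
    have e1 : f ω1 = q ω1 := by simpa using ha ⟨0, by omega⟩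
    have e2 : f ω2 = q ω2 := by simpa using ha ⟨1, by omega⟩
    apply q.injective
    rw [← e1, ← e2, h12]
  have hginj : Function.Injective g := by
    intro ω1 ω2 h12
    obtain ⟨p, hp, ha⟩ := hgP (fun i => if (i : ℕ) = 0 then ω1 else ω2)
    have e1 : g ω1 = p ω1 := by simpa using ha ⟨0, by omega⟩
    have e2 : g ω2 = p ω2 := by simpa using ha ⟨1, by omega⟩
    apply p.injective
    rw [← e1, ← e2, h12]
  let F : Equiv.Perm Ω := Equiv.ofBijective f (Finite.injective_iff_bijective.mp hfinj)
  let G' : Equiv.Perm Ω := Equiv.ofBijective g (Finite.injective_iff_bijective.mp hginj)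
  have hFQ : F ∈ Q := by
    rw [← hQ]
    exact mem_kClosure.mpr fun α => hfQ α
  have hGP : G' ∈ P := by
    rw [← hP]
    exact mem_kClosure.mpr fun α => hgP α
  have hxeq : x = G' * F := by
    ext ω
    obtain ⟨p, hp, q, hq, ha⟩ := hw (fun i => if (i : ℕ) = 0 then ω else F ω)
    have h0 : x ω = p (q ω) := by simpa using ha ⟨0, by omega⟩
    have h1 : x (F ω) = p (q (F ω)) := by simpa using ha ⟨1, by omega⟩
    have w0 := (hwd p hp q hq ω h0).1
    have w1 := (hwd p hp q hq (F ω) h1).2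
    show x ω = G' (F ω)
    have hFω : F ω = q ω := by
      show f ω = q ω
      rw [w0]
    rw [h0, ← hFω]
    exact w1
  rw [hxeq]
  exact Subgroup.mul_mem _ (Subgroup.mem_sup_left hGP) (Subgroup.mem_sup_right hFQ)

theorem IsTotallyKClosed.congr {G H : Type*} [Group G] [Group H] {k : ℕ}
    (h : IsTotallyKClosed k G) (e : G ≃* H) : IsTotallyKClosed k H := by
  intro Ω _ φ hφ
  have h2 := h Ω (φ.comp e.toMonoidHom) (hφ.comp e.injective)
  have hr : (φ.comp e.toMonoidHom).range = φ.range := by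
    ext σ
    constructor
    · rintro ⟨y, rfl⟩; exact ⟨e y, rfl⟩
    · rintro ⟨y, rfl⟩; exact ⟨e.symm y, by simp⟩
  rwa [hr] at h2

theorem isTotallyKClosed_of_subsingleton {G : Type*} [Group G] [Subsingleton G] {k : ℕ}
    (hk : 1 ≤ k) : IsTotallyKClosed k G := by
  intro Ω _ φ hφ
  have hr : φ.range = ⊥ := by
    ext σ
    simp only [MonoidHom.mem_range, Subgroup.mem_bot]
    constructor
    · rintro ⟨y, rfl⟩; rw [Subsingleton.elim y 1, map_one]
    · rintro rfl; exact ⟨1, map_one φ⟩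
  rw [hr, kClosure_bot hk]

theorem isTotallyKClosed_prod {k : ℕ} (hk : 2 ≤ k) {H K : Type*} [Group H] [Group K]
    [Finite H] [Finite K] (hcop : Nat.Coprime (Nat.card H) (Nat.card K))
    (hH : IsTotallyKClosed k H) (hK : IsTotallyKClosed k K) :
    IsTotallyKClosed k (H × K) := by
  intro Ω _ φ hφ
  set φ1 := φ.comp (MonoidHom.inl H K) with hφ1
  set φ2 := φ.comp (MonoidHom.inr H K) with hφ2
  have hinl : Function.Injective (MonoidHom.inl H K) := fun a b hab => by
    simpa using congrArg Prod.fst hab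
  have hinr : Function.Injective (MonoidHom.inr H K) := fun a b hab => by
    simpa using congrArg Prod.snd hab
  have hr1 : kClosure k φ1.range = φ1.range := hH Ω φ1 (hφ.comp hinl)
  have hr2 : kClosure k φ2.range = φ2.range := hK Ω φ2 (hφ.comp hinr)
  have hmul : ∀ (a : H) (b : K), φ (a, b) = φ1 a * φ2 b := by
    intro a b
    rw [hφ1, hφ2]
    simp only [MonoidHom.comp_apply, MonoidHom.inl_apply, MonoidHom.inr_apply, ← map_mul]
    congr 1
    simp
  have hsup : φ.range = φ1.range ⊔ φ2.range := by
    apply le_antisymm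
    · rintro σ ⟨⟨a, b⟩, rfl⟩
      rw [hmul a b]
      exact Subgroup.mul_mem _ (Subgroup.mem_sup_left ⟨a, rfl⟩)
        (Subgroup.mem_sup_right ⟨b, rfl⟩)
    · apply sup_le
      · rintro σ ⟨y, rfl⟩; exact ⟨(y, 1), rfl⟩
      · rintro σ ⟨y, rfl⟩; exact ⟨(1, y), rfl⟩
  have hcomm : ∀ p ∈ φ1.range, ∀ q ∈ φ2.range, Commute p q := by
    rintro _ ⟨a, rfl⟩ _ ⟨b, rfl⟩
    have e1 : φ1 a * φ2 b = φ (a, b) := (hmul a b).symm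
    have e2 : φ2 b * φ1 a = φ (a, b) := by
      rw [hφ1, hφ2]
      simp only [MonoidHom.comp_apply, MonoidHom.inl_apply, MonoidHom.inr_apply, ← map_mul]
      congr 1
      simp
    unfold Commute SemiconjBy
    rw [e1, e2]
  have hcop' : ∀ p ∈ φ1.range, ∀ q ∈ φ2.range, Nat.Coprime (orderOf p) (orderOf q) := by
    rintro _ ⟨a, rfl⟩ _ ⟨b, rfl⟩
    have d1 : orderOf (φ1 a) ∣ Nat.card H := (orderOf_map_dvd φ1 a).trans (orderOf_dvd_natCard a)
    have d2 : orderOf (φ2 b) ∣ Nat.card K := (orderOf_map_dvd φ2 b).trans (orderOf_dvd_natCard b)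
    exact Nat.Coprime.coprime_dvd_left d1 (Nat.Coprime.coprime_dvd_right d2 hcop)
  rw [hsup]
  exact kClosure_sup_eq hk _ _ hcomm hcop' hr1 hr2

theorem isTotallyKClosed_factor_left {k : ℕ} (hk : 1 ≤ k) {H K : Type*} [Group H] [Group K]
    [Finite K] (h : IsTotallyKClosed k (H × K)) : IsTotallyKClosed k H := by
  intro Ω _ φ hφ
  refine le_antisymm ?_ (le_kClosure _ _)
  intro x hx
  rcases isEmpty_or_nonempty Ω with hΩ | hΩ
  · have hx1 : x = 1 := Equiv.ext fun ω => hΩ.elim ω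
    rw [hx1]
    exact φ.range.one_mem
  · have : Inhabited Ω := Classical.inhabited_of_nonempty hΩ
    set n := Nat.card K with hn
    set e : K ≃ Fin n := Finite.equivFin K with he
    set ρ : K →* Equiv.Perm (Fin n) :=
      { toFun := fun b => (e.symm.trans (Equiv.mulLeft b)).trans e
        map_one' := by ext j; simp
        map_mul' := by intro a b; ext j; simp [mul_assoc] } with hρ
    have hρinj : Function.Injective ρ := by
      intro a b hab
      have := congrArg (fun σ : Equiv.Perm (Fin n) => e.symm (σ (e 1))) hab
      simpa [hρ] using this
    set ψ : H × K →* Equiv.Perm (Ω ⊕ Fin n) :=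
      (Equiv.Perm.sumCongrHom Ω (Fin n)).comp (φ.prodMap ρ) with hψ
    have hψinj : Function.Injective ψ := by
      intro a b hab
      have h2 : (φ.prodMap ρ) a = (φ.prodMap ρ) b :=
        Equiv.Perm.sumCongrHom_injective hab
      have hfst : φ a.1 = φ b.1 := congrArg Prod.fst h2
      have hsnd : ρ a.2 = ρ b.2 := congrArg Prod.snd h2
      exact Prod.ext (hφ hfst) (hρinj hsnd)
    have hr := h (Ω ⊕ Fin n) ψ hψinj
    set x' : Equiv.Perm (Ω ⊕ Fin n) := Equiv.sumCongr x 1 with hx'def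
    have hx' : x' ∈ kClosure k ψ.range := by
      refine mem_kClosure.mpr fun α => ?_
      obtain ⟨g, hg, hgx⟩ := mem_kClosure.mp hx (fun i => (α i).elim id fun _ => default)
      obtain ⟨a, rfl⟩ := hg
      refine ⟨ψ (a, 1), ⟨(a, 1), rfl⟩, fun i => ?_⟩
      have hgi := hgx i
      cases hαi : α i with
      | inl ω =>
        rw [hαi] at hgi
        simp only [Sum.elim_inl, id_eq] at hgi
        simp [hx'def, hψ, Equiv.Perm.sumCongrHom, hgi]
      | inr j =>
        simp [hx'def, hψ, Equiv.Perm.sumCongrHom]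
    rw [hr] at hx'
    obtain ⟨⟨a, b⟩, hab⟩ := hx'
    refine ⟨a, Equiv.ext fun ω => ?_⟩
    have := congrArg (fun σ : Equiv.Perm (Ω ⊕ Fin n) => σ (Sum.inl ω)) hab
    simpa [hψ, hx'def, Equiv.Perm.sumCongrHom] using this

def mulEquivPiSplit {ι : Type*} (p : ι → Prop) [DecidablePred p] (M : ι → Type*)
    [∀ i, Mul (M i)] :
    (∀ i, M i) ≃* (∀ i : {x // p x}, M i) × (∀ i : {x // ¬p x}, M i) :=
  { Equiv.piEquivPiSubtypeProd p M with map_mul' := fun _ _ => rfl }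

theorem isTotallyKClosed_pi_factor {k : ℕ} (hk : 2 ≤ k) {ι : Type*} [Finite ι]
    (M : ι → Type*) [∀ i, Group (M i)] [∀ i, Finite (M i)]
    (h : IsTotallyKClosed k (∀ i, M i)) (i0 : ι) : IsTotallyKClosed k (M i0) := by
  classical
  letI : Unique {x : ι // x = i0} := ⟨⟨⟨i0, rfl⟩⟩, fun x => Subtype.ext x.2⟩
  have h2 := h.congr (mulEquivPiSplit (fun i => i = i0) M)
  have h3 := isTotallyKClosed_factor_left (by omega) h2
  exact h3.congr (MulEquiv.piUnique fun i : {x : ι // x = i0} => M i)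

theorem isTotallyKClosed_pi {k : ℕ} (hk : 2 ≤ k) :
    ∀ (n : ℕ) {ι : Type*} [Fintype ι] (M : ι → Type*) [∀ i, Group (M i)] [∀ i, Finite (M i)],
      Fintype.card ι ≤ n →
      (∀ i j, i ≠ j → Nat.Coprime (Nat.card (M i)) (Nat.card (M j))) →
      (∀ i, IsTotallyKClosed k (M i)) → IsTotallyKClosed k (∀ i, M i) := by
  intro n
  induction n with
  | zero =>
    intro ι _ M _ _ hcard _ _
    haveI : IsEmpty ι := Fintype.card_eq_zero_iff.mp (Nat.le_zero.mp hcard)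
    haveI : Subsingleton (∀ i, M i) := ⟨fun f g => funext fun i => isEmptyElim i⟩
    exact isTotallyKClosed_of_subsingleton (by omega)
  | succ n ih =>
    intro ι _ M _ _ hcard hcop htkc
    classical
    rcases isEmpty_or_nonempty ι with hι | hι
    · haveI : Subsingleton (∀ i, M i) := ⟨fun f g => funext fun i => isEmptyElim i⟩
      exact isTotallyKClosed_of_subsingleton (by omega)
    · obtain ⟨i0⟩ := hι
      letI : Unique {x : ι // x = i0} := ⟨⟨⟨i0, rfl⟩⟩, fun x => Subtype.ext x.2⟩
      set e := mulEquivPiSplit (fun i => i = i0) M with he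
      set e1 : (∀ i : {x : ι // x = i0}, M i) ≃* M i0 :=
        MulEquiv.piUnique (fun i : {x : ι // x = i0} => M i) with he1
      have hsub : Fintype.card {x : ι // ¬x = i0} ≤ n := by
        have h4 : Fintype.card {x : ι // ¬x = i0} < Fintype.card ι :=
          Fintype.card_subtype_lt (x := i0) (by simp)
        omega
      have hR : IsTotallyKClosed k (∀ i : {x : ι // ¬x = i0}, M i) :=
        ih _ hsub (fun i j hij => hcop i.1 j.1 (fun hh => hij (Subtype.ext hh)))
          (fun i => htkc i.1)
      have hL : IsTotallyKClosed k (∀ i : {x : ι // x = i0}, M i) := (htkc i0).congr e1.symm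
      have hcop2 : Nat.Coprime (Nat.card (∀ i : {x : ι // x = i0}, M i))
          (Nat.card (∀ i : {x : ι // ¬x = i0}, M i)) := by
        rw [Nat.card_congr e1.toEquiv, Nat.card_pi]
        exact Nat.Coprime.prod_right (fun j _ => hcop i0 j.1 (fun hh => j.2 hh.symm))
      exact (isTotallyKClosed_prod hk hcop2 hL hR).congr e.symm

/-- A finite nilpotent group is totally `k`-closed (`k ≥ 2`) iff all of its Sylow
subgroups are totally `k`-closed. -/
theorem totallyKClosed_iff_sylow (G : Type*) [Group G] [Finite G]
    (hnil : Group.IsNilpotent G) (k : ℕ) (hk : 2 ≤ k) :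
    IsTotallyKClosed k G ↔
      ∀ (p : ℕ), p.Prime → ∀ P : Sylow p G, IsTotallyKClosed k ↥(P : Subgroup G) := by
  classical
  obtain ⟨E⟩ :
      Nonempty ((∀ p : (Nat.card G).primeFactors, ∀ P : Sylow p G, (↑P : Subgroup G)) ≃* G) :=
    ((isNilpotent_of_finite_tfae (G := G)).out 0 4).mp hnil
  have hnorm : ∀ (p : ℕ) (_ : Fact p.Prime) (P : Sylow p G), (↑P : Subgroup G).Normal :=
    ((isNilpotent_of_finite_tfae (G := G)).out 0 3).mp hnil
  constructor
  · intro hG p hp P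
    haveI : Fact p.Prime := ⟨hp⟩
    by_cases hps : p ∈ (Nat.card G).primeFactors
    · have hpi : IsTotallyKClosed k
          (∀ q : (Nat.card G).primeFactors, ∀ P' : Sylow q G, ↥(P' : Subgroup G)) :=
        hG.congr E.symm
      have h1 := isTotallyKClosed_pi_factor hk
        (fun q : (Nat.card G).primeFactors => ∀ P' : Sylow q G, ↥(P' : Subgroup G))
        hpi ⟨p, hps⟩
      letI : Unique (Sylow p G) := Sylow.unique_of_normal default (hnorm p ‹_› default)
      have h2 : IsTotallyKClosed k ↥((default : Sylow p G) : Subgroup G) :=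
        h1.congr (MulEquiv.piUnique (fun P' : Sylow p G => ↥(P' : Subgroup G)))
      have hPd : P = default := Subsingleton.elim _ _
      rw [hPd]
      exact h2
    · have h0 : (Nat.card G).factorization p = 0 := by
        rwa [← Finsupp.notMem_support_iff, Nat.support_factorization]
      have hcard : Nat.card ↥(P : Subgroup G) = 1 := by
        rw [Sylow.card_eq_multiplicity, h0, pow_zero]
      haveI := (Nat.card_eq_one_iff_unique.mp hcard).1
      exact isTotallyKClosed_of_subsingleton (by omega)
  · intro hsyl
    have htkc : ∀ q : (Nat.card G).primeFactors,
        IsTotallyKClosed k (∀ P' : Sylow q G, ↥(P' : Subgroup G)) := by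
      intro q
      haveI : Fact (q.1.Prime) := ⟨Nat.prime_of_mem_primeFactors q.2⟩
      letI : Unique (Sylow q.1 G) := Sylow.unique_of_normal default (hnorm q.1 ‹_› default)
      exact (hsyl q.1 (Nat.prime_of_mem_primeFactors q.2) default).congr
        (MulEquiv.piUnique (fun P' : Sylow q.1 G => ↥(P' : Subgroup G))).symm
    have hcop : ∀ i j : (Nat.card G).primeFactors, i ≠ j →
        Nat.Coprime (Nat.card (∀ P' : Sylow i G, ↥(P' : Subgroup G)))
          (Nat.card (∀ P' : Sylow j G, ↥(P' : Subgroup G))) := by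
      intro i j hij
      haveI hi : Fact (i.1.Prime) := ⟨Nat.prime_of_mem_primeFactors i.2⟩
      haveI hj : Fact (j.1.Prime) := ⟨Nat.prime_of_mem_primeFactors j.2⟩
      letI : Unique (Sylow i.1 G) := Sylow.unique_of_normal default (hnorm i.1 ‹_› default)
      letI : Unique (Sylow j.1 G) := Sylow.unique_of_normal default (hnorm j.1 ‹_› default)
      rw [Nat.card_congr (MulEquiv.piUnique
            (fun P' : Sylow i.1 G => ↥(P' : Subgroup G))).toEquiv,
          Nat.card_congr (MulEquiv.piUnique
            (fun P' : Sylow j.1 G => ↥(P' : Subgroup G))).toEquiv,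
          Sylow.card_eq_multiplicity, Sylow.card_eq_multiplicity]
      exact Nat.Coprime.pow _ _
        ((Nat.coprime_primes hi.out hj.out).mpr (fun hh => hij (Subtype.ext hh)))
    exact (isTotallyKClosed_pi hk (Fintype.card (Nat.card G).primeFactors)
      (fun q : (Nat.card G).primeFactors => ∀ P' : Sylow q G, ↥(P' : Subgroup G))
      le_rfl hcop htkc).congr E
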